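/- Let β > 1. Then for Lebesgue-almost all x ∈ [0,1), lim_{n→∞} l_n(x)/√n = 0, where l_n(x) is the length of the longest string of zeros just after the n-th digit of the β-expansion of x. -/

import Mathlib

open MeasureTheory Filter Set
open scoped ENNReal

/-- The β-transformation `T_β x = βx - ⌊βx⌋` on `[0,1)`. -/
noncomputable def betaT (β : ℝ) (x : ℝ) : ℝ := β * x - ⌊β * x⌋

/-- The `i`-th digit (for `i ≥ 1`) of the β-expansion of `x`. -/
noncomputable def betaEps (β : ℝ) (i : ℕ) (x : ℝ) : ℤ := ⌊β * (betaT β)^[i - 1] x⌋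

/-- The cylinder of order `n` of the β-expansion containing `x`. -/
def betaCyl (β : ℝ) (n : ℕ) (x : ℝ) : Set ℝ :=
  {y ∈ Set.Ico (0:ℝ) 1 | ∀ i, 1 ≤ i → i ≤ n → betaEps β i y = betaEps β i x}

/-- The Gauss map, with `T 0 = 0`. -/
noncomputable def gaussMap (x : ℝ) : ℝ := if x = 0 then 0 else 1 / x - ⌊1 / x⌋

/-- The `i`-th partial quotient (for `i ≥ 1`) of the continued fraction expansion of `x`. -/
noncomputable def cfA (i : ℕ) (x : ℝ) : ℤ := ⌊1 / (gaussMap^[i - 1] x)⌋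

/-- The cylinder of order `m` of the continued fraction expansion containing `x`. -/
def cfCyl (m : ℕ) (x : ℝ) : Set ℝ :=
  {y ∈ Set.Ico (0:ℝ) 1 | ∀ i, 1 ≤ i → i ≤ m → cfA i y = cfA i x}

/-- `k_n(x)`: the exact number of partial quotients of the continued fraction of `x`
determined by the first `n` β-expansion digits of `x`. -/
noncomputable def kCF (β : ℝ) (n : ℕ) (x : ℝ) : ℕ :=
  sSup {m | betaCyl β n x ⊆ cfCyl m x}

/-- Denominators `q_n(x)` of the continued fraction convergents of `x`
(`q_0 = 1`, `q_1 = a_1`, `q_n = a_n q_{n-1} + q_{n-2}`). -/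
noncomputable def cfQ (x : ℝ) : ℕ → ℤ
  | 0 => 1
  | 1 => cfA 1 x
  | (n + 2) => cfA (n + 2) x * cfQ x (n + 1) + cfQ x n

/-- Numerators `p_n(x)` of the continued fraction convergents of `x`
(`p_0 = 0`, `p_1 = 1`, `p_n = a_n p_{n-1} + p_{n-2}`). -/
noncomputable def cfP (x : ℝ) : ℕ → ℤ
  | 0 => 0
  | 1 => 1
  | (n + 2) => cfA (n + 2) x * cfP x (n + 1) + cfP x n

/-- `l_n(x)`: the length of the longest string of zeros just after the `n`-th digit
of the β-expansion of `x`. -/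
noncomputable def lZero (β : ℝ) (n : ℕ) (x : ℝ) : ℕ :=
  sSup {k | ∀ j, 1 ≤ j → j ≤ k → betaEps β (n + j) x = 0}


namespace BetaAux

lemma betaT_eq_fract (β x : ℝ) : betaT β x = Int.fract (β * x) := rfl

lemma betaT_mem (β x : ℝ) : betaT β x ∈ Ico (0:ℝ) 1 := by
  rw [betaT_eq_fract]; exact ⟨Int.fract_nonneg _, Int.fract_lt_one _⟩

lemma iter_mem (β : ℝ) {x : ℝ} (hx : x ∈ Ico (0:ℝ) 1) (n : ℕ) :
    (betaT β)^[n] x ∈ Ico (0:ℝ) 1 := by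
  induction n with
  | zero => exact hx
  | succ n _ => rw [Function.iterate_succ_apply']; exact betaT_mem β _

noncomputable def ufun (β : ℝ) (n : ℕ) : ℝ := (betaT β)^[n] 1

noncomputable def efun (β : ℝ) (n : ℕ) : ℤ := ⌊β * ufun β n⌋

lemma ufun_zero (β : ℝ) : ufun β 0 = 1 := rfl

lemma ufun_succ (β : ℝ) (n : ℕ) : ufun β (n + 1) = β * ufun β n - efun β n := by
  rw [ufun, Function.iterate_succ_apply']; rfl

lemma ufun_nonneg (β : ℝ) (hβ : 1 < β) (n : ℕ) : 0 ≤ ufun β n := by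
  cases n with
  | zero => norm_num [ufun_zero]
  | succ n => exact ((iter_mem β (betaT_mem β 1) n).1).trans_eq (by
      rw [ufun, Function.iterate_succ_apply])

lemma ufun_le_one (β : ℝ) (hβ : 1 < β) (n : ℕ) : ufun β n ≤ 1 := by
  cases n with
  | zero => norm_num [ufun_zero]
  | succ n =>
    have := (iter_mem β (betaT_mem β 1) n).2
    rw [ufun, Function.iterate_succ_apply]
    exact le_of_lt this

lemma efun_nonneg (β : ℝ) (hβ : 1 < β) (n : ℕ) : (0:ℤ) ≤ efun β n :=
  Int.floor_nonneg.2 (mul_nonneg (by linarith) (ufun_nonneg β hβ n))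

lemma efun_le (β : ℝ) (hβ : 1 < β) (n : ℕ) : (efun β n : ℝ) ≤ β :=
  (Int.floor_le _).trans (by nlinarith [ufun_le_one β hβ n, ufun_nonneg β hβ n])

noncomputable def hfun (β : ℝ) (x : ℝ) : ℝ :=
  ∑' n : ℕ, (β⁻¹) ^ n * (if x < ufun β n then 1 else 0)

lemma inv_mem (β : ℝ) (hβ : 1 < β) : 0 ≤ β⁻¹ ∧ β⁻¹ < 1 :=
  ⟨inv_nonneg.2 (by linarith), inv_lt_one_of_one_lt₀ hβ⟩

lemma hsummand_nonneg (β : ℝ) (hβ : 1 < β) (x : ℝ) (n : ℕ) :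
    0 ≤ (β⁻¹) ^ n * (if x < ufun β n then 1 else 0) :=
  mul_nonneg (pow_nonneg (inv_mem β hβ).1 n) (by positivity)

lemma hsummand_le (β : ℝ) (hβ : 1 < β) (x : ℝ) (n : ℕ) :
    (β⁻¹) ^ n * (if x < ufun β n then 1 else 0) ≤ (β⁻¹) ^ n := by
  have := pow_nonneg (inv_mem β hβ).1 n
  have : (if x < ufun β n then (1:ℝ) else 0) ≤ 1 := by split <;> norm_num
  nlinarith [pow_nonneg (inv_mem β hβ).1 n]

lemma hsummable (β : ℝ) (hβ : 1 < β) (x : ℝ) :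
    Summable (fun n : ℕ => (β⁻¹) ^ n * (if x < ufun β n then 1 else 0)) :=
  Summable.of_nonneg_of_le (hsummand_nonneg β hβ x) (hsummand_le β hβ x)
    (summable_geometric_of_lt_one (inv_mem β hβ).1 (inv_mem β hβ).2)

lemma hfun_nonneg (β : ℝ) (hβ : 1 < β) (x : ℝ) : 0 ≤ hfun β x :=
  tsum_nonneg (hsummand_nonneg β hβ x)

lemma hfun_le (β : ℝ) (hβ : 1 < β) (x : ℝ) : hfun β x ≤ (1 - β⁻¹)⁻¹ := by
  have := tsum_geometric_of_lt_one (inv_mem β hβ).1 (inv_mem β hβ).2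
  calc hfun β x ≤ ∑' n : ℕ, (β⁻¹) ^ n :=
        Summable.tsum_le_tsum (hsummand_le β hβ x) (hsummable β hβ x)
          (summable_geometric_of_lt_one (inv_mem β hβ).1 (inv_mem β hβ).2)
    _ = (1 - β⁻¹)⁻¹ := this

lemma hfun_ge_one (β : ℝ) (hβ : 1 < β) {x : ℝ} (hx : x < 1) : 1 ≤ hfun β x := by
  have h0 : (β⁻¹) ^ 0 * (if x < ufun β 0 then (1:ℝ) else 0) = 1 := by
    simp [ufun_zero, hx]
  calc (1:ℝ) = (β⁻¹) ^ 0 * (if x < ufun β 0 then 1 else 0) := h0.symm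
    _ ≤ hfun β x := Summable.le_tsum (hsummable β hβ x) 0 (fun i _ => hsummand_nonneg β hβ x i)

lemma count_lemma (M : ℕ) (c : ℝ) (hc : c ≤ M) :
    ∑ ε ∈ Finset.range M, (if (ε:ℝ) < c then (1:ℝ) else 0) = (⌈c⌉₊ : ℝ) := by
  have hKM : ⌈c⌉₊ ≤ M := Nat.ceil_le.2 (by exact_mod_cast hc)
  have h1 : ∀ ε ∈ Finset.range M, (if (ε:ℝ) < c then (1:ℝ) else 0)
      = (if ε ∈ Finset.range ⌈c⌉₊ then (1:ℝ) else 0) := by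
    intro ε _
    simp only [Finset.mem_range, Nat.lt_ceil]
  rw [Finset.sum_congr rfl h1, Finset.sum_ite_mem]
  have h2 : Finset.range M ∩ Finset.range ⌈c⌉₊ = Finset.range ⌈c⌉₊ := by
    ext x; simp only [Finset.mem_inter, Finset.mem_range]; omega
  simp [h2]

lemma ceil_floor_split {z y : ℝ} (hz : 0 ≤ z) (hy0 : 0 ≤ y) (hy1 : y < 1) :
    (⌈z - y⌉₊ : ℝ) = (⌊z⌋ : ℝ) + (if y < Int.fract z then 1 else 0) := by
  have hfl : (0:ℤ) ≤ ⌊z⌋ := Int.floor_nonneg.2 hz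
  set N : ℕ := ⌊z⌋.toNat with hNdef
  have hNz : (N : ℝ) = (⌊z⌋ : ℝ) := by
    rw [hNdef]; exact_mod_cast congrArg (fun m : ℤ => (m : ℝ)) (Int.toNat_of_nonneg hfl)
  have hfr0 : 0 ≤ Int.fract z := Int.fract_nonneg z
  have hfr1 : Int.fract z < 1 := Int.fract_lt_one z
  have hzeq : (N:ℝ) + Int.fract z = z := by rw [hNz]; exact Int.floor_add_fract z
  by_cases hcase : y < Int.fract z
  · have hc : ⌈z - y⌉₊ = N + 1 := by
      rw [Nat.ceil_eq_iff (Nat.succ_ne_zero N)]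
      refine ⟨?_, ?_⟩
      · push_cast; linarith
      · push_cast; linarith
    rw [hc]; push_cast [hNz]; simp [hcase, hNz]
  · push_neg at hcase
    rcases Nat.eq_zero_or_pos N with h0 | hpos
    · have hN0 : (N:ℝ) = 0 := by rw [h0]; norm_num
      have hle : z - y ≤ 0 := by linarith
      rw [Nat.ceil_eq_zero.2 hle]
      simp [← hNz, hN0, not_lt.2 hcase]
    · have hc : ⌈z - y⌉₊ = N := by
        rw [Nat.ceil_eq_iff (by omega : N ≠ 0)]
        refine ⟨?_, ?_⟩
        · have hcast : ((N - 1 : ℕ) : ℝ) = (N:ℝ) - 1 := by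
            push_cast [Nat.cast_sub hpos]; ring
          rw [hcast]; linarith
        · linarith
      rw [hc, hNz]; simp [not_lt.2 hcase]

lemma ufun_succ_eq_fract (β : ℝ) (n : ℕ) : Int.fract (β * ufun β n) = ufun β (n + 1) := by
  rw [ufun_succ]; rfl

lemma branch_sum (β : ℝ) (hβ : 1 < β) {y : ℝ} (hy0 : 0 ≤ y) (hy1 : y < 1) :
    ∑ ε ∈ Finset.range (⌊β⌋₊ + 1),
      (if y < min 1 (β - (ε:ℝ)) then hfun β ((y + (ε:ℝ)) / β) else 0) = β * hfun β y := by
  have hβ0 : (0:ℝ) < β := by linarith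
  set M := ⌊β⌋₊ + 1 with hM
  have hβM : β < M := by rw [hM]; push_cast; exact Nat.lt_floor_add_one β
  set g : ℕ → ℕ → ℝ :=
    fun ε n => (β⁻¹) ^ n * (if (ε:ℝ) < β * ufun β n - y then 1 else 0) with hg
  have hgnonneg : ∀ ε n, 0 ≤ g ε n := by
    intro ε n; apply mul_nonneg (pow_nonneg (inv_mem β hβ).1 n); positivity
  have hgle : ∀ ε n, g ε n ≤ (β⁻¹) ^ n := by
    intro ε n
    show (β⁻¹) ^ n * (if (ε:ℝ) < β * ufun β n - y then (1:ℝ) else 0) ≤ (β⁻¹) ^ n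
    have h1 : (if (ε:ℝ) < β * ufun β n - y then (1:ℝ) else 0) ≤ 1 := by split <;> norm_num
    have h0 : (0:ℝ) ≤ (if (ε:ℝ) < β * ufun β n - y then (1:ℝ) else 0) := by positivity
    have h2 := pow_nonneg (inv_mem β hβ).1 n
    nlinarith
  have hgsummable : ∀ ε, Summable (g ε) := fun ε =>
    Summable.of_nonneg_of_le (hgnonneg ε) (hgle ε)
      (summable_geometric_of_lt_one (inv_mem β hβ).1 (inv_mem β hβ).2)
  -- Step A
  have stepA : ∀ ε ∈ Finset.range M,
      (if y < min 1 (β - (ε:ℝ)) then hfun β ((y + (ε:ℝ)) / β) else 0) = ∑' n, g ε n := by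
    intro ε _
    by_cases hcond : y < min 1 (β - (ε:ℝ))
    · rw [if_pos hcond, hfun]
      apply tsum_congr; intro n
      rw [hg]
      congr 1
      have : (y + (ε:ℝ)) / β < ufun β n ↔ (ε:ℝ) < β * ufun β n - y := by
        rw [div_lt_iff₀ hβ0]; constructor <;> intro h <;> nlinarith
      simp only [this]
    · rw [if_neg hcond]
      have hzero : ∀ n, g ε n = 0 := by
        intro n
        have h1 : ¬ (y < β - (ε:ℝ)) := by
          intro h; exact hcond (lt_min hy1 h)
        push_neg at h1
        have h2 : β * ufun β n ≤ β := by nlinarith [ufun_le_one β hβ n, ufun_nonneg β hβ n]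
        rw [hg]
        have : ¬ ((ε:ℝ) < β * ufun β n - y) := by push_neg; linarith
        simp [this]
      rw [tsum_congr hzero, tsum_zero]
  rw [Finset.sum_congr rfl stepA, ← Summable.tsum_finsetSum (fun ε _ => hgsummable ε)]
  -- Step C : inner sums
  have stepC : ∀ n, ∑ ε ∈ Finset.range M, g ε n
      = (β⁻¹) ^ n * ((efun β n : ℝ) + (if y < ufun β (n+1) then 1 else 0)) := by
    intro n
    have hz : 0 ≤ β * ufun β n := mul_nonneg hβ0.le (ufun_nonneg β hβ n)
    have hcle : β * ufun β n - y ≤ (M:ℝ) := by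
      have := ufun_le_one β hβ n
      nlinarith
    rw [hg, ← Finset.mul_sum, count_lemma M _ hcle,
      ceil_floor_split hz hy0 hy1, ufun_succ_eq_fract]
    rfl
  rw [tsum_congr stepC]
  -- split and evaluate
  have hA : Summable (fun n => (β⁻¹) ^ n * ((efun β n : ℝ))) := by
    apply Summable.of_nonneg_of_le
      (fun n => mul_nonneg (pow_nonneg (inv_mem β hβ).1 n)
        (by exact_mod_cast efun_nonneg β hβ n))
      (fun n => ?_)
      ((summable_geometric_of_lt_one (inv_mem β hβ).1 (inv_mem β hβ).2).mul_left β)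
    have := efun_le β hβ n
    have h2 := pow_nonneg (inv_mem β hβ).1 n
    have : (β⁻¹)^n * ((efun β n : ℝ)) ≤ (β⁻¹)^n * β := by nlinarith
    linarith [this, (by ring : (β⁻¹)^n * β = β * (β⁻¹)^n)]
  have hB : Summable (fun n => (β⁻¹) ^ n * (if y < ufun β (n+1) then (1:ℝ) else 0)) := by
    apply Summable.of_nonneg_of_le
      (fun n => mul_nonneg (pow_nonneg (inv_mem β hβ).1 n) (by positivity))
      (fun n => ?_)
      (summable_geometric_of_lt_one (inv_mem β hβ).1 (inv_mem β hβ).2)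
    have h1 : (if y < ufun β (n+1) then (1:ℝ) else 0) ≤ 1 := by split <;> norm_num
    have h2 := pow_nonneg (inv_mem β hβ).1 n
    nlinarith
  have hsplit : (∑' n, (β⁻¹) ^ n * ((efun β n : ℝ) + (if y < ufun β (n+1) then 1 else 0)))
      = (∑' n, (β⁻¹) ^ n * ((efun β n : ℝ)))
        + ∑' n, (β⁻¹) ^ n * (if y < ufun β (n+1) then (1:ℝ) else 0) := by
    rw [← hA.tsum_add hB]
    apply tsum_congr; intro n; ring
  rw [hsplit]
  -- Step E : telescoping sum equals β
  have hfle : ∀ n, (β⁻¹)^n * ufun β n ≤ (β⁻¹)^n := by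
    intro n
    have h1 := ufun_le_one β hβ n
    have h2 := pow_nonneg (inv_mem β hβ).1 n
    nlinarith
  have hfnonneg : ∀ n, 0 ≤ (β⁻¹)^n * ufun β n :=
    fun n => mul_nonneg (pow_nonneg (inv_mem β hβ).1 n) (ufun_nonneg β hβ n)
  have hftend : Tendsto (fun n => (β⁻¹)^n * ufun β n) atTop (nhds 0) :=
    squeeze_zero hfnonneg hfle
      (tendsto_pow_atTop_nhds_zero_of_lt_one (inv_mem β hβ).1 (inv_mem β hβ).2)
  have hkey : ∀ n, (β⁻¹)^n * ((efun β n : ℝ))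
      = β * ((β⁻¹)^n * ufun β n - (β⁻¹)^(n+1) * ufun β (n+1)) := by
    intro n
    have h1 : ufun β (n+1) = β * ufun β n - (efun β n : ℝ) := ufun_succ β n
    have hβne : β ≠ 0 := ne_of_gt hβ0
    rw [h1, pow_succ]
    field_simp
    ring
  have hpartial : ∀ N, ∑ i ∈ Finset.range N, (β⁻¹)^i * ((efun β i : ℝ))
      = β * (1 - (β⁻¹)^N * ufun β N) := by
    intro N
    calc ∑ i ∈ Finset.range N, (β⁻¹)^i * ((efun β i : ℝ))
        = ∑ i ∈ Finset.range N,
            β * ((β⁻¹)^i * ufun β i - (β⁻¹)^(i+1) * ufun β (i+1)) :=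
          Finset.sum_congr rfl (fun i _ => hkey i)
      _ = β * ∑ i ∈ Finset.range N,
            ((β⁻¹)^i * ufun β i - (β⁻¹)^(i+1) * ufun β (i+1)) := by rw [Finset.mul_sum]
      _ = β * ((β⁻¹)^0 * ufun β 0 - (β⁻¹)^N * ufun β N) := by
          rw [Finset.sum_range_sub' (fun i => (β⁻¹)^i * ufun β i)]
      _ = β * (1 - (β⁻¹)^N * ufun β N) := by rw [ufun_zero]; norm_num
  have hEtend : Tendsto (fun N => ∑ i ∈ Finset.range N, (β⁻¹)^i * ((efun β i : ℝ)))
      atTop (nhds β) := by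
    have h2 : Tendsto (fun N => β * (1 - (β⁻¹)^N * ufun β N)) atTop (nhds β) := by
      simpa only [sub_zero, mul_one] using ((tendsto_const_nhds (x := (1:ℝ))).sub hftend).const_mul β
    exact h2.congr (fun N => (hpartial N).symm)
  have hE : (∑' n, (β⁻¹)^n * ((efun β n : ℝ))) = β :=
    tendsto_nhds_unique hA.hasSum.tendsto_sum_nat hEtend
  -- Step F
  have hF : (∑' n, (β⁻¹)^n * (if y < ufun β (n+1) then (1:ℝ) else 0))
      = β * (hfun β y - 1) := by
    have hdecomp : hfun β y
        = 1 + β⁻¹ * ∑' n, (β⁻¹)^n * (if y < ufun β (n+1) then (1:ℝ) else 0) := by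
      rw [hfun, Summable.tsum_eq_zero_add (hsummable β hβ y)]
      congr 1
      · simp [ufun_zero, hy1]
      · rw [← tsum_mul_left]
        apply tsum_congr; intro n
        rw [pow_succ']
        ring
    have hβne : β ≠ 0 := by linarith
    rw [hdecomp]
    field_simp
    ring
  rw [hE, hF]
  ring

lemma lintegral_affine (G : ℝ → ℝ≥0∞) (hG : Measurable G) {a : ℝ} (ha : 0 < a) (b : ℝ) :
    ∫⁻ y, G (a * y + b) ∂volume = ENNReal.ofReal a⁻¹ * ∫⁻ x, G x ∂volume := by
  have hφ1 : Measurable fun y : ℝ => a * y := measurable_id.const_mul a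
  have hφ2 : Measurable fun y : ℝ => y + b := measurable_add_const b
  have hmap : Measure.map ((fun y : ℝ => y + b) ∘ fun y : ℝ => a * y) volume
      = ENNReal.ofReal a⁻¹ • volume := by
    rw [← Measure.map_map hφ2 hφ1, Real.map_volume_mul_left (ne_of_gt ha),
      Measure.map_smul, map_add_right_eq_self volume b, abs_of_pos (inv_pos.2 ha)]
  have h1 : ∫⁻ y, G (a * y + b) ∂volume
      = ∫⁻ x, G x ∂(Measure.map ((fun y : ℝ => y + b) ∘ fun y : ℝ => a * y) volume) :=
    (lintegral_map hG (hφ2.comp hφ1)).symm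
  rw [h1, hmap, lintegral_smul_measure, smul_eq_mul]

noncomputable def Hfun (β : ℝ) (x : ℝ) : ℝ≥0∞ := ENNReal.ofReal (hfun β x)

lemma Hfun_measurable (β : ℝ) (hβ : 1 < β) : Measurable (Hfun β) := by
  have heq : Hfun β = fun x => ∑' n : ℕ,
      (Set.Iio (ufun β n)).indicator (fun _ => ENNReal.ofReal ((β⁻¹) ^ n)) x := by
    funext x
    rw [Hfun, hfun, ENNReal.ofReal_tsum_of_nonneg (hsummand_nonneg β hβ x) (hsummable β hβ x)]
    congr 1; funext n
    by_cases hx : x < ufun β n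
    · simp [Set.indicator_of_mem, Set.mem_Iio, hx]
    · simp [Set.mem_Iio, hx]
  rw [heq]
  exact Measurable.ennreal_tsum fun n => measurable_const.indicator measurableSet_Iio

lemma betaT_measurable (β : ℝ) : Measurable (betaT β) := by
  have h1 : Measurable fun x : ℝ => β * x := measurable_id.const_mul β
  have h2 : Measurable fun x : ℝ => (⌊β * x⌋ : ℝ) :=
    (measurable_from_top (f := fun z : ℤ => (z : ℝ))).comp h1.floor
  exact h1.sub h2

def Jset (β : ℝ) (ε : ℕ) : Set ℝ := Ico ((ε:ℝ)/β) (min (((ε:ℝ)+1)/β) 1)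

lemma Jset_floor (β : ℝ) (hβ : 1 < β) {ε : ℕ} {x : ℝ} (hx : x ∈ Jset β ε) :
    ⌊β * x⌋ = (ε : ℤ) := by
  have hβ0 : (0:ℝ) < β := lt_trans one_pos hβ
  obtain ⟨h1, h2⟩ := hx
  have h2' := lt_of_lt_of_le h2 (min_le_left _ _)
  have ha : (ε:ℝ) ≤ β * x := by rw [div_le_iff₀ hβ0] at h1; linarith
  have hb : β * x < (ε:ℝ) + 1 := by rw [lt_div_iff₀ hβ0] at h2'; linarith
  rw [Int.floor_eq_iff]
  constructor <;> push_cast <;> linarith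

lemma Jset_betaT (β : ℝ) (hβ : 1 < β) {ε : ℕ} {x : ℝ} (hx : x ∈ Jset β ε) :
    betaT β x = β * x - (ε:ℝ) := by
  rw [betaT, Jset_floor β hβ hx]; push_cast; ring

lemma Jset_cover (β : ℝ) (hβ : 1 < β) :
    Ico (0:ℝ) 1 = ⋃ ε ∈ Finset.range (⌊β⌋₊ + 1), Jset β ε := by
  have hβ0 : (0:ℝ) < β := lt_trans one_pos hβ
  ext x
  simp only [Set.mem_iUnion, Finset.mem_range, exists_prop]
  constructor
  · rintro ⟨hx0, hx1⟩
    have hbx0 : 0 ≤ β * x := by positivity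
    refine ⟨⌊β * x⌋₊, ?_, ?_, ?_⟩
    · have : β * x ≤ β := by nlinarith
      have := Nat.floor_le_floor this
      omega
    · rw [div_le_iff₀ hβ0]
      have := Nat.floor_le hbx0
      linarith
    · refine lt_min ?_ hx1
      rw [lt_div_iff₀ hβ0]
      have := Nat.lt_floor_add_one (β * x)
      push_cast
      linarith
  · rintro ⟨ε, _, hl, hr⟩
    constructor
    · have : (0:ℝ) ≤ (ε:ℝ)/β := by positivity
      linarith
    · exact lt_of_lt_of_le hr (min_le_right _ _)

lemma Jset_disj (β : ℝ) (hβ : 1 < β) :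
    Set.PairwiseDisjoint ↑(Finset.range (⌊β⌋₊ + 1)) (Jset β) := by
  intro i _ j _ hij
  rw [Function.onFun, Set.disjoint_left]
  intro x hxi hxj
  have h1 := Jset_floor β hβ hxi
  have h2 := Jset_floor β hβ hxj
  rw [h1] at h2
  exact hij (by exact_mod_cast h2)

lemma transfer (β : ℝ) (hβ : 1 < β) (f : ℝ → ℝ≥0∞) (hf : Measurable f) :
    ∫⁻ x in Ico (0:ℝ) 1, f (betaT β x) * Hfun β x
      = ∫⁻ y in Ico (0:ℝ) 1, f y * Hfun β y := by
  have hβ0 : (0:ℝ) < β := lt_trans one_pos hβ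
  have hβne : β ≠ 0 := ne_of_gt hβ0
  set M := ⌊β⌋₊ + 1 with hM
  have hHmeas := Hfun_measurable β hβ
  have hmeas1 : ∀ ε : ℕ, Measurable fun x => f (β * x - (ε:ℝ)) * Hfun β x := fun ε =>
    (hf.comp ((measurable_id.const_mul β).sub measurable_const)).mul hHmeas
  have hmeas2 : ∀ ε : ℕ, Measurable fun y => f y * Hfun β ((y + (ε:ℝ))/β) := fun ε =>
    hf.mul (hHmeas.comp ((measurable_add_const _).div_const β))
  have hJmeas : ∀ ε : ℕ, MeasurableSet (Jset β ε) := fun ε => measurableSet_Ico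
  conv_lhs => rw [Jset_cover β hβ]
  rw [lintegral_biUnion_finset (Jset_disj β hβ) (fun ε _ => hJmeas ε)]
  have step1 : ∀ ε ∈ Finset.range M,
      ∫⁻ x in Jset β ε, f (betaT β x) * Hfun β x
        = ENNReal.ofReal β⁻¹ * ∫⁻ y, (Ico (0:ℝ) (min 1 (β - (ε:ℝ)))).indicator
            (fun y => f y * Hfun β ((y + (ε:ℝ))/β)) y := by
    intro ε _
    have hcongr : ∫⁻ x in Jset β ε, f (betaT β x) * Hfun β x
        = ∫⁻ x in Jset β ε, f (β * x - (ε:ℝ)) * Hfun β x :=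
      setLIntegral_congr_fun measurableSet_Ico
        (fun x hx => by simp only [Jset_betaT β hβ hx])
    rw [hcongr, ← lintegral_indicator (hJmeas ε)]
    set G : ℝ → ℝ≥0∞ := (Jset β ε).indicator (fun x => f (β * x - (ε:ℝ)) * Hfun β x)
      with hG
    have hGmeas : Measurable G := (hmeas1 ε).indicator (hJmeas ε)
    have haff := lintegral_affine G hGmeas (inv_pos.2 hβ0) ((ε:ℝ)/β)
    rw [inv_inv] at haff
    have hmemiff : ∀ y : ℝ, (y + (ε:ℝ))/β ∈ Jset β ε ↔
        y ∈ Ico (0:ℝ) (min 1 (β - (ε:ℝ))) := by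
      intro y
      have e1 : (ε:ℝ)/β ≤ (y + (ε:ℝ))/β ↔ 0 ≤ y := by
        rw [div_le_div_iff₀ hβ0 hβ0]; constructor <;> intro <;> nlinarith
      have e2 : (y + (ε:ℝ))/β < ((ε:ℝ)+1)/β ↔ y < 1 := by
        rw [div_lt_div_iff₀ hβ0 hβ0]; constructor <;> intro <;> nlinarith
      have e3 : (y + (ε:ℝ))/β < 1 ↔ y < β - (ε:ℝ) := by
        rw [div_lt_one hβ0]; constructor <;> intro <;> linarith
      simp only [Jset, mem_Ico, lt_min_iff, e1, e2, e3] <;> tauto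
    have hptw : ∀ y : ℝ, G (β⁻¹ * y + (ε:ℝ)/β)
        = (Ico (0:ℝ) (min 1 (β - (ε:ℝ)))).indicator
            (fun y => f y * Hfun β ((y + (ε:ℝ))/β)) y := by
      intro y
      have harg : β⁻¹ * y + (ε:ℝ)/β = (y + (ε:ℝ))/β := by field_simp
      rw [harg]
      by_cases ht : (y + (ε:ℝ))/β ∈ Jset β ε
      · rw [hG, Set.indicator_of_mem ht, Set.indicator_of_mem ((hmemiff y).1 ht)]
        have harg2 : β * ((y + (ε:ℝ))/β) - (ε:ℝ) = y := by field_simp; ring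
        rw [harg2]
      · rw [hG, Set.indicator_of_notMem ht,
          Set.indicator_of_notMem (fun h => ht ((hmemiff y).2 h))]
    calc ∫⁻ x, G x
        = ENNReal.ofReal β⁻¹ * (ENNReal.ofReal β * ∫⁻ x, G x) := by
          rw [← mul_assoc, ← ENNReal.ofReal_mul (inv_nonneg.2 hβ0.le),
            inv_mul_cancel₀ hβne, ENNReal.ofReal_one, one_mul]
      _ = ENNReal.ofReal β⁻¹ * ∫⁻ y, (Ico (0:ℝ) (min 1 (β - (ε:ℝ)))).indicator
            (fun y => f y * Hfun β ((y + (ε:ℝ))/β)) y := by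
          rw [← haff, lintegral_congr hptw]
  rw [Finset.sum_congr rfl step1]
  have step2 : ∀ ε ∈ Finset.range M,
      ENNReal.ofReal β⁻¹ * ∫⁻ y, (Ico (0:ℝ) (min 1 (β - (ε:ℝ)))).indicator
          (fun y => f y * Hfun β ((y + (ε:ℝ))/β)) y
        = ∫⁻ y, ENNReal.ofReal β⁻¹ * (Ico (0:ℝ) (min 1 (β - (ε:ℝ)))).indicator
            (fun y => f y * Hfun β ((y + (ε:ℝ))/β)) y := fun ε _ =>
    (lintegral_const_mul _ ((hmeas2 ε).indicator measurableSet_Ico)).symm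
  rw [Finset.sum_congr rfl step2,
    ← lintegral_finset_sum _ (fun ε _ =>
      (((hmeas2 ε).indicator measurableSet_Ico).const_mul _))]
  have hfinal : ∀ y : ℝ,
      ∑ ε ∈ Finset.range M, ENNReal.ofReal β⁻¹ * (Ico (0:ℝ) (min 1 (β - (ε:ℝ)))).indicator
          (fun y => f y * Hfun β ((y + (ε:ℝ))/β)) y
        = (Ico (0:ℝ) 1).indicator (fun y => f y * Hfun β y) y := by
    intro y
    by_cases hy : y ∈ Ico (0:ℝ) 1
    · rw [Set.indicator_of_mem hy]
      have hterm : ∀ ε ∈ Finset.range M,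
          ENNReal.ofReal β⁻¹ * (Ico (0:ℝ) (min 1 (β - (ε:ℝ)))).indicator
              (fun y => f y * Hfun β ((y + (ε:ℝ))/β)) y
            = f y * ENNReal.ofReal
                (β⁻¹ * (if y < min 1 (β - (ε:ℝ)) then hfun β ((y + (ε:ℝ))/β) else 0)) := by
        intro ε _
        by_cases hmem : y < min 1 (β - (ε:ℝ))
        · rw [Set.indicator_of_mem (Set.mem_Ico.2 ⟨hy.1, hmem⟩), if_pos hmem,
            ENNReal.ofReal_mul (inv_nonneg.2 hβ0.le)]
          rw [show Hfun β ((y + (ε:ℝ))/β) = ENNReal.ofReal (hfun β ((y + (ε:ℝ))/β)) from rfl]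
          ring
        · rw [Set.indicator_of_notMem (fun h => hmem (Set.mem_Ico.1 h).2), if_neg hmem]
          simp
      rw [Finset.sum_congr rfl hterm, ← Finset.mul_sum,
        ← ENNReal.ofReal_sum_of_nonneg (fun ε _ => mul_nonneg (inv_nonneg.2 hβ0.le)
          (by split_ifs with h; exacts [hfun_nonneg β hβ _, le_rfl]))]
      have hsum : ∑ ε ∈ Finset.range M,
          β⁻¹ * (if y < min 1 (β - (ε:ℝ)) then hfun β ((y + (ε:ℝ))/β) else 0)
            = hfun β y := by
        rw [← Finset.mul_sum, branch_sum β hβ hy.1 hy.2, ← mul_assoc,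
          inv_mul_cancel₀ hβne, one_mul]
      rw [hsum]
      rfl
    · rw [Set.indicator_of_notMem hy]
      apply Finset.sum_eq_zero
      intro ε _
      have hnm : y ∉ Ico (0:ℝ) (min 1 (β - (ε:ℝ))) := by
        intro h
        exact hy ⟨h.1, lt_of_lt_of_le h.2 (min_le_left _ _)⟩
      rw [Set.indicator_of_notMem hnm, mul_zero]
  rw [lintegral_congr hfinal, lintegral_indicator measurableSet_Ico]

lemma transfer_iter (β : ℝ) (hβ : 1 < β) (f : ℝ → ℝ≥0∞) (hf : Measurable f) (n : ℕ) :
    ∫⁻ x in Ico (0:ℝ) 1, f ((betaT β)^[n] x) * Hfun β x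
      = ∫⁻ y in Ico (0:ℝ) 1, f y * Hfun β y := by
  induction n with
  | zero => simp
  | succ n ih =>
    calc ∫⁻ x in Ico (0:ℝ) 1, f ((betaT β)^[n+1] x) * Hfun β x
        = ∫⁻ x in Ico (0:ℝ) 1, (fun z => f ((betaT β)^[n] z)) (betaT β x) * Hfun β x := by
          apply lintegral_congr
          intro x
          rw [Function.iterate_succ_apply]
      _ = ∫⁻ y in Ico (0:ℝ) 1, (fun z => f ((betaT β)^[n] z)) y * Hfun β y :=
          transfer β hβ _ (hf.comp ((betaT_measurable β).iterate n))
      _ = ∫⁻ y in Ico (0:ℝ) 1, f y * Hfun β y := ih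

lemma measure_bound (β : ℝ) (hβ : 1 < β) (n : ℕ) (t : ℝ) (ht : 0 ≤ t) :
    volume (Ico (0:ℝ) 1 ∩ (betaT β)^[n] ⁻¹' (Iio t))
      ≤ ENNReal.ofReal ((1 - β⁻¹)⁻¹ * t) := by
  have hβ0 : (0:ℝ) < β := lt_trans one_pos hβ
  have hinv1 : β⁻¹ < 1 := (inv_mem β hβ).2
  have hC0 : (0:ℝ) ≤ (1 - β⁻¹)⁻¹ := by apply inv_nonneg.2; linarith
  have hTn : Measurable ((betaT β)^[n]) := (betaT_measurable β).iterate n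
  set f : ℝ → ℝ≥0∞ := (Iio t).indicator (fun _ => 1) with hf
  have hfmeas : Measurable f := measurable_const.indicator measurableSet_Iio
  have h1 : volume (Ico (0:ℝ) 1 ∩ (betaT β)^[n] ⁻¹' (Iio t))
      = ∫⁻ x in Ico (0:ℝ) 1, f ((betaT β)^[n] x) ∂volume := by
    have hpt : ∀ x : ℝ, f ((betaT β)^[n] x)
        = ((betaT β)^[n] ⁻¹' (Iio t)).indicator (fun _ => (1:ℝ≥0∞)) x := by
      intro x
      by_cases hx : (betaT β)^[n] x ∈ Iio t
      · rw [hf, Set.indicator_of_mem hx,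
          Set.indicator_of_mem (show x ∈ (betaT β)^[n] ⁻¹' (Iio t) from hx)]
      · rw [hf, Set.indicator_of_notMem hx,
          Set.indicator_of_notMem (show x ∉ (betaT β)^[n] ⁻¹' (Iio t) from hx)]
    rw [lintegral_congr hpt, setLIntegral_indicator (hTn measurableSet_Iio),
      setLIntegral_one, inter_comm]
  calc volume (Ico (0:ℝ) 1 ∩ (betaT β)^[n] ⁻¹' (Iio t))
      = ∫⁻ x in Ico (0:ℝ) 1, f ((betaT β)^[n] x) ∂volume := h1
    _ ≤ ∫⁻ x in Ico (0:ℝ) 1, f ((betaT β)^[n] x) * Hfun β x ∂volume := by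
        apply lintegral_mono_ae
        filter_upwards [ae_restrict_mem measurableSet_Ico] with x hx
        conv_lhs => rw [← mul_one (f ((betaT β)^[n] x))]
        exact mul_le_mul_right (ENNReal.one_le_ofReal.2 (hfun_ge_one β hβ hx.2)) _
    _ = ∫⁻ y in Ico (0:ℝ) 1, f y * Hfun β y ∂volume := transfer_iter β hβ f hfmeas n
    _ ≤ ∫⁻ y in Ico (0:ℝ) 1,
          (Iio t).indicator (fun _ => ENNReal.ofReal ((1 - β⁻¹)⁻¹)) y ∂volume := by
        apply lintegral_mono
        intro y
        show f y * Hfun β y ≤ (Iio t).indicator (fun _ => ENNReal.ofReal ((1 - β⁻¹)⁻¹)) y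
        by_cases hy : y ∈ Iio t
        · rw [hf, Set.indicator_of_mem hy, Set.indicator_of_mem hy, one_mul]
          exact ENNReal.ofReal_le_ofReal (hfun_le β hβ y)
        · rw [hf, Set.indicator_of_notMem hy, Set.indicator_of_notMem hy, zero_mul]
    _ = ENNReal.ofReal ((1 - β⁻¹)⁻¹) * volume (Iio t ∩ Ico (0:ℝ) 1) := by
        rw [setLIntegral_indicator measurableSet_Iio, setLIntegral_const]
    _ ≤ ENNReal.ofReal ((1 - β⁻¹)⁻¹) * ENNReal.ofReal t := by
        apply mul_le_mul_right
        calc volume (Iio t ∩ Ico (0:ℝ) 1) ≤ volume (Ico (0:ℝ) t) :=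
              measure_mono (fun y hy => ⟨hy.2.1, hy.1⟩)
          _ = ENNReal.ofReal t := by rw [Real.volume_Ico, sub_zero]
    _ = ENNReal.ofReal ((1 - β⁻¹)⁻¹ * t) := (ENNReal.ofReal_mul hC0).symm

lemma digits_zero_imp_small (β : ℝ) (hβ : 1 < β) {y : ℝ} (hy : y ∈ Ico (0:ℝ) 1) (k : ℕ)
    (hd : ∀ j, 1 ≤ j → j ≤ k → betaEps β j y = 0) : y < (β⁻¹) ^ k := by
  have hβ0 : (0:ℝ) < β := lt_trans one_pos hβ
  have key : ∀ m, m ≤ k → (betaT β)^[m] y = β ^ m * y := by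
    intro m
    induction m with
    | zero => intro _; simp
    | succ m ih =>
      intro hm
      have h1 : (betaT β)^[m] y = β ^ m * y := ih (le_trans (Nat.le_succ m) hm)
      have hz : ⌊β * (β ^ m * y)⌋ = 0 := by
        have h2 := hd (m+1) (by omega) hm
        rw [betaEps, Nat.add_sub_cancel, h1] at h2
        exact h2
      rw [Function.iterate_succ_apply', h1, betaT, hz]
      push_cast
      ring
  have h3 : (betaT β)^[k] y < 1 := (iter_mem β hy k).2
  rw [key k le_rfl] at h3
  have hpk : (0:ℝ) < β ^ k := pow_pos hβ0 k
  rw [inv_pow, ← one_div, lt_div_iff₀ hpk]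
  linarith [h3]


lemma lZero_le_imp (β : ℝ) (n k : ℕ) (x : ℝ) (hk : k ≤ lZero β n x) :
    ∀ j, 1 ≤ j → j ≤ k → betaEps β (n + j) x = 0 := by
  set S := {k' : ℕ | ∀ j, 1 ≤ j → j ≤ k' → betaEps β (n + j) x = 0} with hS
  have h0 : 0 ∈ S := by
    intro j hj1 hj0; omega
  by_cases hbdd : BddAbove S
  · have hmem : sSup S ∈ S := Nat.sSup_mem ⟨0, h0⟩ hbdd
    intro j hj1 hjk
    exact hmem j hj1 (le_trans hjk hk)
  · intro j hj1 hjk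
    obtain ⟨k', hk'S, hkk'⟩ := not_bddAbove_iff.1 hbdd k
    exact hk'S j hj1 (le_trans hjk hkk'.le)

lemma eps_shift (β : ℝ) (n j : ℕ) (x : ℝ) (hj : 1 ≤ j) :
    betaEps β (n + j) x = betaEps β j ((betaT β)^[n] x) := by
  rw [betaEps, betaEps]
  congr 1
  have h1 : n + j - 1 = (j - 1) + n := by omega
  rw [h1, Function.iterate_add_apply]

lemma contain (β : ℝ) (hβ : 1 < β) (n k : ℕ) {x : ℝ} (hx : x ∈ Ico (0:ℝ) 1)
    (hk : k ≤ lZero β n x) : (betaT β)^[n] x < (β⁻¹) ^ k := by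
  apply digits_zero_imp_small β hβ (iter_mem β hx n) k
  intro j hj1 hjk
  rw [← eps_shift β n j x hj1]
  exact lZero_le_imp β n k x hk j hj1 hjk

lemma summable_pow_ceil (β : ℝ) (hβ : 1 < β) (m : ℕ) (hm : 1 ≤ m) :
    Summable (fun n : ℕ => (β⁻¹) ^ (⌈Real.sqrt n / m⌉₊)) := by
  have hβ0 : (0:ℝ) < β := lt_trans one_pos hβ
  have hr0 : (0:ℝ) < β⁻¹ := inv_pos.2 hβ0
  have hr1 : β⁻¹ < 1 := inv_lt_one_of_one_lt₀ hβ
  have hm0 : (0:ℝ) < (m:ℝ) := by exact_mod_cast hm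
  set c : ℝ := Real.log β / m with hc
  have hc0 : 0 < c := div_pos (Real.log_pos hβ) hm0
  have hlog : ∀ᶠ x : ℝ in atTop, ‖Real.log x‖ ≤ c / 2 * ‖x ^ (1/2 : ℝ)‖ :=
    (isLittleO_log_rpow_atTop (by norm_num : (0:ℝ) < 1/2)).def (by positivity)
  have hev : ∀ᶠ n : ℕ in atTop,
      (β⁻¹) ^ (⌈Real.sqrt n / m⌉₊) ≤ 1 / (n:ℝ) ^ 2 := by
    filter_upwards [tendsto_natCast_atTop_atTop.eventually hlog,
      eventually_ge_atTop 1] with n hn hn1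
    have hn0 : (0:ℝ) < (n:ℝ) := by exact_mod_cast Nat.lt_of_lt_of_le Nat.zero_lt_one hn1
    have hn1' : (1:ℝ) ≤ (n:ℝ) := by exact_mod_cast hn1
    set s : ℝ := Real.sqrt n with hs
    have hs0 : 0 < s := Real.sqrt_pos.2 hn0
    have hsrw : (n:ℝ) ^ (1/2 : ℝ) = s := (Real.sqrt_eq_rpow (n:ℝ)).symm
    have hlogn : Real.log n ≤ c / 2 * s := by
      have h1 : ‖Real.log (n:ℝ)‖ = Real.log n :=
        Real.norm_of_nonneg (Real.log_nonneg hn1')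
      have h2 : ‖(n:ℝ) ^ (1/2 : ℝ)‖ = s := by
        rw [hsrw]; exact Real.norm_of_nonneg hs0.le
      rw [h1, h2] at hn
      exact hn
    set K : ℕ := ⌈s / m⌉₊ with hK
    have step1 : (β⁻¹) ^ K = (β⁻¹ : ℝ) ^ (K : ℝ) := (Real.rpow_natCast _ _).symm
    have step2 : (β⁻¹ : ℝ) ^ (K : ℝ) ≤ (β⁻¹ : ℝ) ^ (s / m : ℝ) :=
      Real.rpow_le_rpow_of_exponent_ge hr0 hr1.le (Nat.le_ceil _)
    have step3 : (β⁻¹ : ℝ) ^ (s / m : ℝ) ≤ 1 / (n:ℝ) ^ 2 := by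
      have hexp : (β⁻¹ : ℝ) ^ (s / m : ℝ) = Real.exp (-(s * c)) := by
        rw [Real.rpow_def_of_pos hr0, Real.log_inv]
        congr 1
        rw [hc]
        ring
      have h2n : 1 / (n:ℝ) ^ 2 = Real.exp (-(2 * Real.log n)) := by
        rw [Real.exp_neg]
        have : Real.exp (2 * Real.log n) = (n:ℝ) ^ 2 := by
          rw [show (2 : ℝ) * Real.log n = ((2:ℕ) : ℝ) * Real.log n by norm_num,
            ← Real.log_pow, Real.exp_log (by positivity)]
        rw [this, one_div]
      rw [hexp, h2n]
      apply Real.exp_le_exp.2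
      nlinarith
    calc (β⁻¹) ^ K = (β⁻¹ : ℝ) ^ (K : ℝ) := step1
      _ ≤ (β⁻¹ : ℝ) ^ (s / m : ℝ) := step2
      _ ≤ 1 / (n:ℝ) ^ 2 := step3
  have hO : (fun n : ℕ => (β⁻¹) ^ (⌈Real.sqrt n / m⌉₊))
      =O[atTop] (fun n : ℕ => 1 / (n:ℝ) ^ 2) := by
    rw [Asymptotics.isBigO_iff]
    refine ⟨1, ?_⟩
    filter_upwards [hev] with n hn
    rw [one_mul, Real.norm_eq_abs, Real.norm_eq_abs,
      abs_of_nonneg (by positivity), abs_of_nonneg (by positivity)]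
    exact hn
  exact summable_of_isBigO_nat (Real.summable_one_div_nat_pow.2 (by norm_num)) hO

end BetaAux

open BetaAux in
theorem ln_over_sqrt_to_zero (β : ℝ) (hβ : 1 < β) :
    ∀ᵐ x ∂(volume.restrict (Set.Ico (0:ℝ) 1)),
      Tendsto (fun n : ℕ => (lZero β n x : ℝ) / Real.sqrt n) atTop (nhds 0) := by
  have hβ0 : (0:ℝ) < β := lt_trans one_pos hβ
  have hr0 : (0:ℝ) < β⁻¹ := inv_pos.2 hβ0
  have hr1 : β⁻¹ < 1 := inv_lt_one_of_one_lt₀ hβ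
  have hC0 : (0:ℝ) ≤ (1 - β⁻¹)⁻¹ := by apply inv_nonneg.2; linarith
  set μ := volume.restrict (Set.Ico (0:ℝ) 1) with hμ
  set D : ℕ → ℕ → Set ℝ := fun m n =>
    Ico (0:ℝ) 1 ∩ (betaT β)^[n] ⁻¹' (Iio ((β⁻¹) ^ (⌈Real.sqrt n / m⌉₊))) with hD
  have hmeasD : ∀ m n, MeasurableSet (D m n) := fun m n =>
    measurableSet_Ico.inter (((betaT_measurable β).iterate n) measurableSet_Iio)
  have hμD : ∀ m n, μ (D m n)
      ≤ ENNReal.ofReal ((1 - β⁻¹)⁻¹ * (β⁻¹) ^ (⌈Real.sqrt n / m⌉₊)) := by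
    intro m n
    have heq : μ (D m n) = volume (D m n) := by
      rw [hμ, Measure.restrict_apply (hmeasD m n)]
      congr 1
      rw [hD]
      exact Set.inter_eq_left.2 Set.inter_subset_left
    rw [heq]
    exact measure_bound β hβ n _ (by positivity)
  have hsum : ∀ m : ℕ, 1 ≤ m → (∑' n, μ (D m n)) ≠ ⊤ := by
    intro m hm
    have hs := summable_pow_ceil β hβ m hm
    have hb : (∑' n, μ (D m n))
        ≤ ENNReal.ofReal ((1 - β⁻¹)⁻¹)
          * ENNReal.ofReal (∑' n : ℕ, (β⁻¹) ^ (⌈Real.sqrt n / m⌉₊)) := by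
      calc (∑' n, μ (D m n))
          ≤ ∑' n : ℕ, ENNReal.ofReal ((1 - β⁻¹)⁻¹ * (β⁻¹) ^ (⌈Real.sqrt n / m⌉₊)) :=
            ENNReal.tsum_le_tsum (hμD m)
        _ = ∑' n : ℕ, ENNReal.ofReal ((1 - β⁻¹)⁻¹)
              * ENNReal.ofReal ((β⁻¹) ^ (⌈Real.sqrt n / m⌉₊)) := by
            apply tsum_congr; intro n
            rw [← ENNReal.ofReal_mul hC0]
        _ = ENNReal.ofReal ((1 - β⁻¹)⁻¹)
              * ∑' n : ℕ, ENNReal.ofReal ((β⁻¹) ^ (⌈Real.sqrt n / m⌉₊)) :=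
            ENNReal.tsum_mul_left
        _ = ENNReal.ofReal ((1 - β⁻¹)⁻¹)
              * ENNReal.ofReal (∑' n : ℕ, (β⁻¹) ^ (⌈Real.sqrt n / m⌉₊)) := by
            rw [← ENNReal.ofReal_tsum_of_nonneg (fun n => by positivity) hs]
    exact ne_top_of_le_ne_top (ENNReal.mul_ne_top ENNReal.ofReal_ne_top
      ENNReal.ofReal_ne_top) hb
  have hBC : ∀ m : ℕ, 1 ≤ m → (∀ᵐ x ∂μ, ∀ᶠ n in atTop, x ∉ D m n) := fun m hm =>
    ae_eventually_notMem (hsum m hm)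
  have hae : ∀ᵐ x ∂μ, x ∈ Ico (0:ℝ) 1 ∧ ∀ m : ℕ, 1 ≤ m → ∀ᶠ n in atTop, x ∉ D m n := by
    refine (ae_restrict_mem measurableSet_Ico).and ?_
    rw [ae_all_iff]
    intro m
    by_cases hm : 1 ≤ m
    · filter_upwards [hBC m hm] with x hx
      intro _; exact hx
    · filter_upwards with x hm'
      exact absurd hm' hm
  filter_upwards [hae] with x hx
  obtain ⟨hx01, hxm⟩ := hx
  rw [Metric.tendsto_atTop]
  intro ε hε
  obtain ⟨m, hmgt⟩ := exists_nat_gt (2 / ε)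
  have hm2 : (0:ℝ) < 2/ε := by positivity
  have hm0 : (0:ℝ) < (m:ℝ) := lt_trans hm2 hmgt
  have hm1 : 1 ≤ m := by
    have : 0 < m := by exact_mod_cast hm0
    omega
  obtain ⟨N, hN⟩ := eventually_atTop.1 (hxm m hm1)
  refine ⟨max N (m^2+1), fun n hn => ?_⟩
  have hnN : N ≤ n := le_trans (le_max_left _ _) hn
  have hnm : m^2+1 ≤ n := le_trans (le_max_right _ _) hn
  have hn1 : 1 ≤ n := by omega
  have hn0 : (0:ℝ) < (n:ℝ) := by
    exact_mod_cast Nat.lt_of_lt_of_le Nat.zero_lt_one hn1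
  have hsq : 0 < Real.sqrt n := Real.sqrt_pos.2 hn0
  have hxD := hN n hnN
  have hlz : (lZero β n x : ℝ) < Real.sqrt n / m + 1 := by
    have h1 : ¬ (⌈Real.sqrt n / m⌉₊ ≤ lZero β n x) := by
      intro hcon
      exact hxD ⟨hx01, contain β hβ n _ hx01 hcon⟩
    push_neg at h1
    have h2 : (lZero β n x : ℝ) < (⌈Real.sqrt n / m⌉₊ : ℝ) := by exact_mod_cast h1
    have h3 : (⌈Real.sqrt n / m⌉₊ : ℝ) < Real.sqrt n / m + 1 :=
      Nat.ceil_lt_add_one (by positivity)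
    linarith
  have hsqm : (m:ℝ) < Real.sqrt n := by
    rw [show (m:ℝ) = Real.sqrt ((m:ℝ)^2) from (Real.sqrt_sq hm0.le).symm]
    apply Real.sqrt_lt_sqrt (by positivity)
    have : ((m^2 : ℕ) : ℝ) < (n:ℝ) := by exact_mod_cast (by omega : m^2 < n)
    push_cast at this
    linarith
  rw [Real.dist_eq, sub_zero, abs_of_nonneg (by positivity)]
  have hdiv : (lZero β n x : ℝ) / Real.sqrt n < (Real.sqrt n / m + 1) / Real.sqrt n := by
    gcongr
  have hexp : (Real.sqrt n / m + 1) / Real.sqrt n = 1/m + 1/Real.sqrt n := by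
    field_simp
  have hfrac : 1/Real.sqrt n < 1/(m:ℝ) := by
    apply one_div_lt_one_div_of_lt hm0 hsqm
  have h2m : 2/(m:ℝ) < ε := by
    rw [div_lt_iff₀ hε] at hmgt
    rw [div_lt_iff₀ hm0]
    linarith [mul_comm ε (m:ℝ)]
  calc (lZero β n x : ℝ) / Real.sqrt n
      < (Real.sqrt n / m + 1) / Real.sqrt n := hdiv
    _ = 1/m + 1/Real.sqrt n := hexp
    _ < 1/m + 1/m := by linarith
    _ = 2/(m:ℝ) := by ring
    _ < ε := h2m
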